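/- Let H be a real Hilbert space, E : H → ℝ Fréchet differentiable, and ξ : [0,∞) → H differentiable with ξ'(t) = −∇E(ξ(t)) for all t ≥ 0. Let γ∞ ∈ H, Z > 0, δ ∈ (0,1], θ ∈ [1/2,1), and suppose ‖∇E(η)‖ ≥ Z|E(η) − E(γ∞)|^θ for all η with ‖η − γ∞‖ < δ. Let 0 ≤ t₁ ≤ t₂ and assume that for all t ∈ [t₁,t₂] one has ‖ξ(t) − γ∞‖ < δ and E(ξ(t)) > E(γ∞). Then (1−θ) Z ∫_{t₁}^{t₂} ‖ξ'(r)‖ dr ≤ (E(ξ(t₁)) − E(γ∞))^{1−θ} − (E(ξ(t₂)) − E(γ∞))^{1−θ}. -/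

import Mathlib

/-- Integrated Łojasiewicz–Simon length estimate along the
gradient flow: as long as the trajectory stays in the Łojasiewicz ball with
`E(ξ(t)) > E(γ∞)`, one has
`(1−θ) Z ∫_{t₁}^{t₂} ‖ξ'(r)‖ dr ≤ (E(ξ(t₁))−E(γ∞))^{1−θ} − (E(ξ(t₂))−E(γ∞))^{1−θ}`. -/
theorem stmt12 {H : Type*} [NormedAddCommGroup H] [InnerProductSpace ℝ H]
    [CompleteSpace H]
    (E : H → ℝ) (hE : Differentiable ℝ E)
    (ξ ξ' : ℝ → H) (hξ : ∀ t : ℝ, 0 ≤ t → HasDerivAt ξ (ξ' t) t)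
    (hflow : ∀ t : ℝ, 0 ≤ t → ξ' t = -(gradient E (ξ t)))
    (γlim : H) (Z δ θ : ℝ) (hZ : 0 < Z) (hδ : δ ∈ Set.Ioc (0:ℝ) 1)
    (hθ : θ ∈ Set.Ico (1/2 : ℝ) 1)
    (hLS : ∀ η : H, ‖η - γlim‖ < δ → Z * |E η - E γlim| ^ θ ≤ ‖gradient E η‖)
    (t₁ t₂ : ℝ) (ht₁ : 0 ≤ t₁) (ht₁₂ : t₁ ≤ t₂)
    (hstay : ∀ t ∈ Set.Icc t₁ t₂, ‖ξ t - γlim‖ < δ ∧ E γlim < E (ξ t)) :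
    (1 - θ) * Z * ∫ r in t₁..t₂, ‖ξ' r‖
      ≤ (E (ξ t₁) - E γlim) ^ (1 - θ) - (E (ξ t₂) - E γlim) ^ (1 - θ) := by
  obtain ⟨hθ0, hθ1⟩ := hθ
  have hp : (0:ℝ) < 1 - θ := by linarith
  set c := E γlim with hc
  -- the "energy" function composed with the flow
  set g : ℝ → ℝ := fun t => (E (ξ t) - c) ^ (1 - θ) with hg
  set g' : ℝ → ℝ := fun t => (1 - θ) * (E (ξ t) - c) ^ (-θ) * (‖ξ' t‖ * ‖ξ' t‖) with hg'
  have hpos : ∀ t ∈ Set.Icc t₁ t₂, 0 < E (ξ t) - c := fun t ht => by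
    have := (hstay t ht).2; linarith
  have hnorm : ∀ t ∈ Set.Icc t₁ t₂, ξ' t = -(gradient E (ξ t)) := fun t ht =>
    hflow t (le_trans ht₁ ht.1)
  -- derivative of E ∘ ξ
  have hEξ : ∀ t ∈ Set.Icc t₁ t₂,
      HasDerivAt (fun s => E (ξ s) - c) (-(‖ξ' t‖ * ‖ξ' t‖)) t := by
    intro t ht
    have h1 : HasDerivAt (fun s => E (ξ s))
        (inner ℝ (gradient E (ξ t)) (ξ' t) : ℝ) t := by
      have := ((hE (ξ t)).hasGradientAt.hasFDerivAt).comp_hasDerivAt t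
        (hξ t (le_trans ht₁ ht.1))
      rw [InnerProductSpace.toDual_apply_apply] at this
      exact this
    have h2 : (inner ℝ (gradient E (ξ t)) (ξ' t) : ℝ) = -(‖ξ' t‖ * ‖ξ' t‖) := by
      rw [hnorm t ht]
      simp [inner_neg_right, real_inner_self_eq_norm_mul_norm, sq]
    exact (h2 ▸ h1).sub_const c
  -- derivative of g
  have hgderiv : ∀ t ∈ Set.Icc t₁ t₂, HasDerivAt (fun s => -(g s)) (g' t) t := by
    intro t ht
    have hy : (0:ℝ) < E (ξ t) - c := hpos t ht
    have h1 : HasDerivAt (fun y : ℝ => y ^ (1 - θ))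
        ((1 - θ) * (E (ξ t) - c) ^ ((1 - θ) - 1)) (E (ξ t) - c) :=
      Real.hasDerivAt_rpow_const (Or.inl hy.ne')
    have h2 := h1.comp t (hEξ t ht)
    have h3 : HasDerivAt g
        ((1 - θ) * (E (ξ t) - c) ^ ((1 - θ) - 1) * -(‖ξ' t‖ * ‖ξ' t‖)) t := h2
    have h4 := h3.neg
    have he : -((1 - θ) * (E (ξ t) - c) ^ ((1 - θ) - 1) * -(‖ξ' t‖ * ‖ξ' t‖)) = g' t := by
      have h5 : (1 - θ) - 1 = -θ := by ring
      rw [h5, hg']; ring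
    exact he ▸ h4
  -- continuity of -g on the interval
  have hgcont : ContinuousOn (fun s => -(g s)) (Set.Icc t₁ t₂) := fun t ht =>
    ((hgderiv t ht).continuousAt).continuousWithinAt
  -- g' is nonnegative
  have hg'nonneg : ∀ t ∈ Set.Icc t₁ t₂, 0 ≤ g' t := by
    intro t ht
    have hy : (0:ℝ) < E (ξ t) - c := hpos t ht
    have : (0:ℝ) ≤ (E (ξ t) - c) ^ (-θ) := (Real.rpow_pos_of_pos hy _).le
    have := mul_nonneg (mul_nonneg hp.le this) (mul_self_nonneg ‖ξ' t‖)
    simpa [hg'] using this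
  -- key pointwise inequality
  have hkey : ∀ t ∈ Set.Icc t₁ t₂, (1 - θ) * Z * ‖ξ' t‖ ≤ g' t := by
    intro t ht
    have hy : (0:ℝ) < E (ξ t) - c := hpos t ht
    have hLSt : Z * (E (ξ t) - c) ^ θ ≤ ‖ξ' t‖ := by
      have h6 := hLS (ξ t) (hstay t ht).1
      rw [abs_of_pos hy] at h6
      rw [hnorm t ht, norm_neg]
      exact h6
    have hyθ : (0:ℝ) < (E (ξ t) - c) ^ θ := Real.rpow_pos_of_pos hy _
    have hinv : (E (ξ t) - c) ^ (-θ) * (E (ξ t) - c) ^ θ = 1 := by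
      rw [← Real.rpow_add hy]; simp
    calc (1 - θ) * Z * ‖ξ' t‖
        = (1 - θ) * ((E (ξ t) - c) ^ (-θ) * (E (ξ t) - c) ^ θ) * (Z * ‖ξ' t‖) := by
          rw [hinv]; ring
      _ = (1 - θ) * (E (ξ t) - c) ^ (-θ) * ((Z * (E (ξ t) - c) ^ θ) * ‖ξ' t‖) := by
          ring
      _ ≤ (1 - θ) * (E (ξ t) - c) ^ (-θ) * (‖ξ' t‖ * ‖ξ' t‖) := by
          apply mul_le_mul_of_nonneg_left
          · exact mul_le_mul_of_nonneg_right hLSt (norm_nonneg _)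
          · exact mul_nonneg hp.le (Real.rpow_pos_of_pos hy _).le
      _ = g' t := rfl
  -- integrability of g'
  have hg'int : MeasureTheory.IntegrableOn g' (Set.Icc t₁ t₂) := by
    rw [integrableOn_Icc_iff_integrableOn_Ioc]
    exact intervalIntegral.integrableOn_deriv_of_nonneg hgcont
      (fun x hx => hgderiv x (Set.mem_Icc_of_Ioo hx))
      (fun x hx => hg'nonneg x (Set.mem_Icc_of_Ioo hx))
  -- integrability of the integrand
  have hmeas : MeasureTheory.AEStronglyMeasurable (fun r => (1 - θ) * Z * ‖ξ' r‖)
      (MeasureTheory.volume.restrict (Set.Icc t₁ t₂)) := by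
    have : ∀ r ∈ Set.Icc t₁ t₂, (1 - θ) * Z * ‖deriv ξ r‖ = (1 - θ) * Z * ‖ξ' r‖ := by
      intro r hr
      rw [(hξ r (le_trans ht₁ hr.1)).deriv]
    refine MeasureTheory.AEStronglyMeasurable.congr
      ((stronglyMeasurable_deriv ξ).norm.const_mul ((1 - θ) * Z)).aestronglyMeasurable ?_
    exact (MeasureTheory.ae_restrict_mem measurableSet_Icc).mono this
  have hφint : MeasureTheory.IntegrableOn (fun r => (1 - θ) * Z * ‖ξ' r‖)
      (Set.Icc t₁ t₂) := by
    refine MeasureTheory.Integrable.mono' hg'int hmeas ?_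
    refine (MeasureTheory.ae_restrict_mem measurableSet_Icc).mono fun t ht => ?_
    rw [Real.norm_of_nonneg (by positivity)]
    exact hkey t ht
  -- the fundamental inequality
  have main : (∫ r in t₁..t₂, (1 - θ) * Z * ‖ξ' r‖)
      ≤ (-(g t₂)) - (-(g t₁)) := by
    refine intervalIntegral.integral_le_sub_of_hasDeriv_right_of_le ht₁₂ hgcont
      (fun x hx => (hgderiv x (Set.mem_Icc_of_Ioo hx)).hasDerivWithinAt) hφint
      (fun x hx => hkey x (Set.mem_Icc_of_Ioo hx))
  rw [intervalIntegral.integral_const_mul] at main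
  linarith [main]
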